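/- Let q₁, q₂ be complex polynomials with deg q₁ = deg q₂ = d ≥ 2, and define F : ℂ × ℂ → ℂ × ℂ by F(w₁, w₂) = (q₁.eval w₁, q₂.eval w₂). Then the bicomplex Julia set equals the topological boundary of the bicomplex filled-in Julia set: J₂(F) = frontier K₂(F). -/

import Mathlib

/-- A family `F : ι → α → E` of functions into a normed space is normal in the general sense on
a set `U` if every sequence in the family has a subsequence which either converges uniformly on
every compact subset of `U` to a limit function, or diverges uniformly to `∞` on every compact
subset of `U`. -/
def NormalGenOn {α E ι : Type*} [TopologicalSpace α] [NormedAddCommGroup E]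
    (F : ι → α → E) (U : Set α) : Prop :=
  ∀ u : ℕ → ι, ∃ φ : ℕ → ℕ, StrictMono φ ∧
    ((∃ f : α → E, ∀ K : Set α, K ⊆ U → IsCompact K →
        TendstoUniformlyOn (fun n => F (u (φ n))) f Filter.atTop K) ∨
     (∀ K : Set α, K ⊆ U → IsCompact K → ∀ M : ℝ, 0 < M →
        ∀ᶠ n in Filter.atTop, ∀ z ∈ K, M ≤ ‖F (u (φ n)) z‖))

/-- A family is normal in the general sense at a point if it is normal in the general sense on
some open neighborhood of that point. -/
def NormalGenAt {α E ι : Type*} [TopologicalSpace α] [NormedAddCommGroup E]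
    (F : ι → α → E) (z : α) : Prop :=
  ∃ U : Set α, IsOpen U ∧ z ∈ U ∧ NormalGenOn F U

/-- The Julia set of a self-map `G` of a normed space: the set of points at which the family of
iterates `{G^[n] : n ∈ ℕ}` is not normal in the general sense. -/
def juliaSet {E : Type*} [NormedAddCommGroup E] (G : E → E) : Set E :=
  {z | ¬ NormalGenAt (fun n : ℕ => G^[n]) z}

/-- The filled-in Julia set of a self-map `G` of a normed space: the set of points with bounded
orbit under `G`. -/
def filledJuliaSet {E : Type*} [NormedAddCommGroup E] (G : E → E) : Set E :=
  {z | Bornology.IsBounded (Set.range fun n : ℕ => G^[n] z)}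

open Filter Metric Set

/-- Escape radius for a polynomial of degree ≥ 2. -/
lemma escape_radius (q : Polynomial ℂ) (hq : 2 ≤ q.natDegree) :
    ∃ R : ℝ, 1 ≤ R ∧ ∀ w : ℂ, R ≤ ‖w‖ → 2 * ‖w‖ ≤ ‖q.eval w‖ := by
  set d := q.natDegree with hdq
  have hq0 : q ≠ 0 := by
    intro h
    have : d = 0 := by rw [hdq, h, Polynomial.natDegree_zero]
    omega
  have hc : q.coeff d ≠ 0 := by
    have := Polynomial.leadingCoeff_ne_zero.mpr hq0
    rwa [Polynomial.leadingCoeff] at this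
  set c := q.coeff d with hcdef
  have hcpos : 0 < ‖c‖ := norm_pos_iff.mpr hc
  set S := ∑ i ∈ Finset.range d, ‖q.coeff i‖ with hSdef
  have hS : 0 ≤ S := Finset.sum_nonneg fun i _ => norm_nonneg _
  refine ⟨max 1 ((S + 2) / ‖c‖), le_max_left _ _, ?_⟩
  intro w hw
  have hw1 : 1 ≤ ‖w‖ := le_trans (le_max_left _ _) hw
  have hw2 : (S + 2) / ‖c‖ ≤ ‖w‖ := le_trans (le_max_right _ _) hw
  have hkey : S + 2 ≤ ‖c‖ * ‖w‖ := by
    rw [div_le_iff₀ hcpos] at hw2; linarith [hw2]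
  have hd1 : d - 1 + 1 = d := Nat.succ_pred_eq_of_pos (Nat.lt_of_lt_of_le Nat.zero_lt_two hq)
  have heval : q.eval w = (∑ i ∈ Finset.range d, q.coeff i * w ^ i) + c * w ^ d := by
    rw [Polynomial.eval_eq_sum_range, Finset.sum_range_succ]
  have hlow : ‖∑ i ∈ Finset.range d, q.coeff i * w ^ i‖ ≤ S * ‖w‖ ^ (d - 1) := by
    calc ‖∑ i ∈ Finset.range d, q.coeff i * w ^ i‖
        ≤ ∑ i ∈ Finset.range d, ‖q.coeff i * w ^ i‖ := norm_sum_le _ _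
      _ ≤ ∑ i ∈ Finset.range d, ‖q.coeff i‖ * ‖w‖ ^ (d - 1) := by
          refine Finset.sum_le_sum fun i hi => ?_
          rw [norm_mul, norm_pow]
          refine mul_le_mul_of_nonneg_left ?_ (norm_nonneg _)
          exact pow_le_pow_right₀ hw1 (by have := Finset.mem_range.mp hi; omega)
      _ = S * ‖w‖ ^ (d - 1) := by rw [hSdef, Finset.sum_mul]
  have htop : ‖c * w ^ d‖ = ‖c‖ * ‖w‖ ^ d := by rw [norm_mul, norm_pow]
  have h1 : ‖c‖ * ‖w‖ ^ d - S * ‖w‖ ^ (d - 1) ≤ ‖q.eval w‖ := by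
    have := norm_sub_norm_le (c * w ^ d) (-(∑ i ∈ Finset.range d, q.coeff i * w ^ i))
    rw [sub_neg_eq_add, norm_neg, htop] at this
    have h2 : c * w ^ d + ∑ i ∈ Finset.range d, q.coeff i * w ^ i = q.eval w := by
      rw [heval]; ring
    rw [h2] at this
    linarith [hlow]
  have hpow : ‖w‖ ^ d = ‖w‖ ^ (d - 1) * ‖w‖ := by rw [← pow_succ, hd1]
  have hwpow : ‖w‖ ≤ ‖w‖ ^ (d - 1) := by
    calc ‖w‖ = ‖w‖ ^ 1 := (pow_one _).symm
      _ ≤ ‖w‖ ^ (d - 1) := pow_le_pow_right₀ hw1 (by omega)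
  have hwpos : (0:ℝ) < ‖w‖ := by linarith
  nlinarith [h1, hkey, hwpow, hwpos, mul_le_mul_of_nonneg_left hkey (le_trans hwpos.le hwpow)]

/-- Iterated escape: once beyond the escape radius, iterates grow geometrically. -/
lemma iter_escape (q : Polynomial ℂ) {R : ℝ} (hR1 : 1 ≤ R)
    (hesc : ∀ w : ℂ, R ≤ ‖w‖ → 2 * ‖w‖ ≤ ‖q.eval w‖)
    {w : ℂ} (hw : R ≤ ‖w‖) (n : ℕ) :
    R ≤ ‖(fun x => q.eval x)^[n] w‖ ∧ 2 ^ n * ‖w‖ ≤ ‖(fun x => q.eval x)^[n] w‖ := by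
  induction n with
  | zero => simpa using hw
  | succ n ih =>
    obtain ⟨ih1, ih2⟩ := ih
    rw [Function.iterate_succ_apply']
    have h2 := hesc _ ih1
    constructor
    · calc R ≤ ‖(fun x => q.eval x)^[n] w‖ := ih1
        _ ≤ 2 * ‖(fun x => q.eval x)^[n] w‖ := by nlinarith [norm_nonneg ((fun x => q.eval x)^[n] w)]
        _ ≤ _ := h2
    · calc 2 ^ (n + 1) * ‖w‖ = 2 * (2 ^ n * ‖w‖) := by ring
        _ ≤ 2 * ‖(fun x => q.eval x)^[n] w‖ := by linarith
        _ ≤ _ := h2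

/-- Membership in the filled Julia set of a single polynomial, via the escape radius. -/
lemma mem_filled_iff (q : Polynomial ℂ) {R : ℝ} (hR1 : 1 ≤ R)
    (hesc : ∀ w : ℂ, R ≤ ‖w‖ → 2 * ‖w‖ ≤ ‖q.eval w‖) (w : ℂ) :
    w ∈ filledJuliaSet (fun x => q.eval x) ↔ ∀ n, ‖(fun x => q.eval x)^[n] w‖ ≤ R := by
  constructor
  · intro hw
    by_contra h
    push_neg at h
    obtain ⟨m, hm⟩ := h
    have hw' : Bornology.IsBounded (Set.range fun n : ℕ => (fun x => q.eval x)^[n] w) := hw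
    obtain ⟨C, hC⟩ := (isBounded_iff_forall_norm_le).mp hw'
    -- iterates from time m grow without bound
    obtain ⟨N, hN⟩ := pow_unbounded_of_one_lt (C / R) (one_lt_two (α := ℝ))
    have h1 := (iter_escape q hR1 hesc hm.le (N)).2
    rw [← Function.iterate_add_apply] at h1
    have h2 : ‖(fun x => q.eval x)^[N + m] w‖ ≤ C := hC _ ⟨N + m, rfl⟩
    have hRpos : (0:ℝ) < R := lt_of_lt_of_le one_pos hR1
    have : C / R < 2 ^ N := hN
    have : C < 2 ^ N * R := by rwa [div_lt_iff₀ hRpos] at this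
    nlinarith [hm, (pow_pos (two_pos (α := ℝ)) N)]
  · intro h
    show Bornology.IsBounded (Set.range fun n : ℕ => (fun x => q.eval x)^[n] w)
    exact (isBounded_iff_forall_norm_le).mpr ⟨R, by rintro x ⟨n, rfl⟩; exact h n⟩

/-- The filled Julia set of a polynomial is closed. -/
lemma filled_closed (q : Polynomial ℂ) {R : ℝ} (hR1 : 1 ≤ R)
    (hesc : ∀ w : ℂ, R ≤ ‖w‖ → 2 * ‖w‖ ≤ ‖q.eval w‖) :
    IsClosed (filledJuliaSet (fun x => q.eval x)) := by
  have : filledJuliaSet (fun x => q.eval x)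
      = ⋂ n : ℕ, (fun x => q.eval x)^[n] ⁻¹' (closedBall 0 R) := by
    ext w
    simp only [Set.mem_iInter, Set.mem_preimage, mem_closedBall, dist_zero_right]
    exact mem_filled_iff q hR1 hesc w
  rw [this]
  exact isClosed_iInter fun n =>
    (IsClosed.preimage (((q.continuous).iterate n)) Metric.isClosed_closedBall)

/-- Orbit invariance: iterates of a point in the filled Julia set stay in it. -/
lemma iter_mem_filled (q : Polynomial ℂ) {w : ℂ}
    (hw : w ∈ filledJuliaSet (fun x => q.eval x)) (m : ℕ) :
    (fun x => q.eval x)^[m] w ∈ filledJuliaSet (fun x => q.eval x) := by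
  have hw' : Bornology.IsBounded (Set.range fun n : ℕ => (fun x => q.eval x)^[n] w) := hw
  show Bornology.IsBounded (Set.range fun n : ℕ => (fun x => q.eval x)^[n] ((fun x => q.eval x)^[m] w))
  refine hw'.subset ?_
  rintro x ⟨n, rfl⟩
  exact ⟨n + m, Function.iterate_add_apply _ n m w⟩

/-- Points outside the filled Julia set eventually escape past the radius. -/
lemma escape_of_not_mem (q : Polynomial ℂ) {R : ℝ} (hR1 : 1 ≤ R)
    (hesc : ∀ w : ℂ, R ≤ ‖w‖ → 2 * ‖w‖ ≤ ‖q.eval w‖) {w : ℂ}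
    (hw : w ∉ filledJuliaSet (fun x => q.eval x)) :
    ∃ m, R < ‖(fun x => q.eval x)^[m] w‖ := by
  by_contra h
  push_neg at h
  exact hw ((mem_filled_iff q hR1 hesc w).mpr h)

section Product

variable (q₁ q₂ : Polynomial ℂ)

/-- Iterates of the product map act coordinatewise. -/
lemma prod_iterate (n : ℕ) (w : ℂ × ℂ) :
    (fun w : ℂ × ℂ => (q₁.eval w.1, q₂.eval w.2))^[n] w
      = ((fun x => q₁.eval x)^[n] w.1, (fun x => q₂.eval x)^[n] w.2) := by
  induction n with
  | zero => rfl
  | succ n ih => rw [Function.iterate_succ_apply', Function.iterate_succ_apply',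
      Function.iterate_succ_apply', ih]

/-- The filled Julia set of the product map is the product of the filled Julia sets. -/
lemma prod_filled :
    filledJuliaSet (fun w : ℂ × ℂ => (q₁.eval w.1, q₂.eval w.2))
      = (filledJuliaSet fun x => q₁.eval x) ×ˢ (filledJuliaSet fun x => q₂.eval x) := by
  ext w
  simp only [Set.mem_prod]
  constructor
  · intro hw
    have hw' : Bornology.IsBounded
        (Set.range fun n : ℕ => (fun w : ℂ × ℂ => (q₁.eval w.1, q₂.eval w.2))^[n] w) := hw
    obtain ⟨C, hC⟩ := (isBounded_iff_forall_norm_le).mp hw'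
    constructor
    · show Bornology.IsBounded (Set.range fun n : ℕ => (fun x => q₁.eval x)^[n] w.1)
      refine (isBounded_iff_forall_norm_le).mpr ⟨C, ?_⟩
      rintro x ⟨n, rfl⟩
      have := hC _ ⟨n, rfl⟩
      simp only [prod_iterate] at this
      exact le_trans (norm_fst_le (((fun x => q₁.eval x)^[n] w.1, (fun x => q₂.eval x)^[n] w.2) : ℂ × ℂ)) this
    · show Bornology.IsBounded (Set.range fun n : ℕ => (fun x => q₂.eval x)^[n] w.2)
      refine (isBounded_iff_forall_norm_le).mpr ⟨C, ?_⟩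
      rintro x ⟨n, rfl⟩
      have := hC _ ⟨n, rfl⟩
      simp only [prod_iterate] at this
      exact le_trans (norm_snd_le (((fun x => q₁.eval x)^[n] w.1, (fun x => q₂.eval x)^[n] w.2) : ℂ × ℂ)) this
  · rintro ⟨h1, h2⟩
    have h1' : Bornology.IsBounded (Set.range fun n : ℕ => (fun x => q₁.eval x)^[n] w.1) := h1
    have h2' : Bornology.IsBounded (Set.range fun n : ℕ => (fun x => q₂.eval x)^[n] w.2) := h2
    obtain ⟨C₁, hC₁⟩ := (isBounded_iff_forall_norm_le).mp h1'
    obtain ⟨C₂, hC₂⟩ := (isBounded_iff_forall_norm_le).mp h2'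
    show Bornology.IsBounded
        (Set.range fun n : ℕ => (fun w : ℂ × ℂ => (q₁.eval w.1, q₂.eval w.2))^[n] w)
    refine (isBounded_iff_forall_norm_le).mpr ⟨max C₁ C₂, ?_⟩
    rintro x ⟨n, rfl⟩
    simp only [prod_iterate, Prod.norm_def]
    exact max_le_max (hC₁ _ ⟨n, rfl⟩) (hC₂ _ ⟨n, rfl⟩)

end Product

set_option synthInstance.maxHeartbeats 1000000 in
/-- Sequential Arzelà–Ascoli for a uniformly bounded, uniformly Lipschitz sequence. -/
lemma seq_unif_conv {s : Set ℂ} (hs : IsCompact s) {L : NNReal} {R : ℝ}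
    (g : ℕ → ℂ → ℂ) (hlip : ∀ n, LipschitzOnWith L (g n) s)
    (hbd : ∀ n, ∀ x ∈ s, ‖g n x‖ ≤ R) :
    ∃ φ : ℕ → ℕ, StrictMono φ ∧ ∃ f : ℂ → ℂ,
      TendstoUniformlyOn (fun n => g (φ n)) f atTop s := by
  haveI : CompactSpace s := isCompact_iff_compactSpace.mp hs
  let u : ℕ → BoundedContinuousFunction s ℂ := fun n =>
    BoundedContinuousFunction.ofNormedAddCommGroup (s.restrict (g n))
      ((hlip n).to_restrict).continuous R (fun x => hbd n x x.2)
  let A : Set (BoundedContinuousFunction s ℂ) :=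
    {h | LipschitzWith L h ∧ ∀ x, h x ∈ closedBall (0:ℂ) R}
  have hA : IsCompact (closure A) := by
    refine BoundedContinuousFunction.arzela_ascoli (closedBall (0:ℂ) R)
      (isCompact_closedBall _ _) A (fun h x hh => hh.2 x) ?_
    intro x
    rw [Metric.equicontinuousAt_iff]
    intro ε hε
    refine ⟨ε / (L + 1), by positivity, fun y hy h => ?_⟩
    have h1 : (0:ℝ) < (L:ℝ) + 1 := by positivity
    calc dist (h.1 x) (h.1 y) ≤ L * dist x y := (h.2.1).dist_le_mul x y
      _ ≤ L * (ε / (L + 1)) := by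
          refine mul_le_mul_of_nonneg_left ?_ (NNReal.coe_nonneg L)
          rw [dist_comm]; exact hy.le
      _ < ((L:ℝ) + 1) * (ε / (L + 1)) :=
          mul_lt_mul_of_pos_right (lt_add_one _) (div_pos hε h1)
      _ = ε := by rw [mul_comm]; exact div_mul_cancel₀ ε h1.ne'
  have hu : ∀ n, u n ∈ closure A := fun n => subset_closure
    ⟨(hlip n).to_restrict, fun x => by
      rw [mem_closedBall, dist_zero_right]; exact hbd n x x.2⟩
  obtain ⟨f₀, -, φ, hφ, hconv⟩ := hA.tendsto_subseq hu
  classical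
  refine ⟨φ, hφ, fun x => if h : x ∈ s then f₀ ⟨x, h⟩ else 0, ?_⟩
  rw [tendstoUniformlyOn_iff_tendstoUniformly_comp_coe]
  have h2 := BoundedContinuousFunction.tendsto_iff_tendstoUniformly.mp hconv
  have h3 : ((fun x : ℂ => if h : x ∈ s then f₀ ⟨x, h⟩ else 0) ∘ (Subtype.val : s → ℂ)) = ⇑f₀ := by
    ext x
    simp only [Function.comp_apply, dif_pos x.2]
  rw [h3]
  exact h2

/-- Iterates of a polynomial are entire. -/
lemma iter_differentiable (q : Polynomial ℂ) (m : ℕ) :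
    Differentiable ℂ ((fun y => q.eval y)^[m]) := by
  induction m with
  | zero => exact differentiable_id
  | succ m ih =>
    rw [Function.iterate_succ']
    exact (q.differentiable).comp ih

/-- Normality of iterates on a disk well inside the filled Julia set, one coordinate. -/
lemma coord_normal (q : Polynomial ℂ) {R r : ℝ} (hR1 : 1 ≤ R)
    (hesc : ∀ w : ℂ, R ≤ ‖w‖ → 2 * ‖w‖ ≤ ‖q.eval w‖) {a : ℂ} (hr : 0 < r)
    (hball : closedBall a (2 * r) ⊆ filledJuliaSet (fun x => q.eval x)) (u : ℕ → ℕ) :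
    ∃ φ : ℕ → ℕ, StrictMono φ ∧ ∃ f : ℂ → ℂ,
      TendstoUniformlyOn (fun n => (fun y => q.eval y)^[u (φ n)]) f atTop (closedBall a r) := by
  have hbd : ∀ m : ℕ, ∀ x ∈ closedBall a (2 * r), ‖(fun y => q.eval y)^[m] x‖ ≤ R :=
    fun m x hx => (mem_filled_iff q hR1 hesc x).mp (hball hx) m
  have hderiv : ∀ m : ℕ, ∀ x ∈ closedBall a r, ‖deriv ((fun y => q.eval y)^[m]) x‖ ≤ R / r := by
    intro m x hx
    refine Complex.norm_deriv_le_of_forall_mem_sphere_norm_le hr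
      ((iter_differentiable q m).diffContOnCl) (fun z hz => hbd m z ?_)
    rw [mem_sphere] at hz
    rw [mem_closedBall] at hx ⊢
    calc dist z a ≤ dist z x + dist x a := dist_triangle _ _ _
      _ ≤ r + r := add_le_add hz.le hx
      _ = 2 * r := by ring
  have hlip : ∀ m : ℕ, LipschitzOnWith (Real.toNNReal (R / r))
      ((fun y => q.eval y)^[m]) (closedBall a r) := by
    intro m
    refine Convex.lipschitzOnWith_of_nnnorm_deriv_le
      (fun x _ => (iter_differentiable q m).differentiableAt) ?_ (convex_closedBall a r)
    intro x hx
    rw [← norm_toNNReal]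
    exact Real.toNNReal_mono (hderiv m x hx)
  have hbd' : ∀ n : ℕ, ∀ x ∈ closedBall a r, ‖(fun y => q.eval y)^[u n] x‖ ≤ R := by
    intro n x hx
    exact hbd (u n) x (closedBall_subset_closedBall (by linarith) hx)
  exact seq_unif_conv (isCompact_closedBall a r)
    (fun n => (fun y => q.eval y)^[u n]) (fun n => hlip (u n)) hbd'

section Main

variable (q₁ q₂ : Polynomial ℂ) {R₁ R₂ : ℝ}

/-- Lower bound on iterates of the product map when the first coordinate has escaped. -/
lemma lower_bound_fst (hR1 : 1 ≤ R₁)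
    (hesc₁ : ∀ w : ℂ, R₁ ≤ ‖w‖ → 2 * ‖w‖ ≤ ‖q₁.eval w‖) {w : ℂ × ℂ} {m : ℕ}
    (hv : R₁ ≤ ‖(fun x => q₁.eval x)^[m] w.1‖) {n : ℕ} (hn : m ≤ n) :
    (2:ℝ) ^ (n - m) ≤ ‖(fun w : ℂ × ℂ => (q₁.eval w.1, q₂.eval w.2))^[n] w‖ := by
  set v := (fun x => q₁.eval x)^[m] w.1 with hvdef
  have h1 := (iter_escape q₁ hR1 hesc₁ hv (n - m)).2
  have h2 : (fun x => q₁.eval x)^[n] w.1 = (fun x => q₁.eval x)^[n - m] v := by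
    rw [hvdef, ← Function.iterate_add_apply]
    congr 1
    omega
  have h3 : ‖(fun x => q₁.eval x)^[n] w.1‖
      ≤ ‖(fun w : ℂ × ℂ => (q₁.eval w.1, q₂.eval w.2))^[n] w‖ := by
    rw [prod_iterate]
    exact norm_fst_le (((fun x => q₁.eval x)^[n] w.1, (fun x => q₂.eval x)^[n] w.2) : ℂ × ℂ)
  rw [h2] at h3
  have hv1 : (1:ℝ) ≤ ‖v‖ := le_trans hR1 hv
  nlinarith [pow_pos (two_pos (α := ℝ)) (n - m)]

/-- Lower bound on iterates of the product map when the second coordinate has escaped. -/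
lemma lower_bound_snd (hR2 : 1 ≤ R₂)
    (hesc₂ : ∀ w : ℂ, R₂ ≤ ‖w‖ → 2 * ‖w‖ ≤ ‖q₂.eval w‖) {w : ℂ × ℂ} {m : ℕ}
    (hv : R₂ ≤ ‖(fun x => q₂.eval x)^[m] w.2‖) {n : ℕ} (hn : m ≤ n) :
    (2:ℝ) ^ (n - m) ≤ ‖(fun w : ℂ × ℂ => (q₁.eval w.1, q₂.eval w.2))^[n] w‖ := by
  set v := (fun x => q₂.eval x)^[m] w.2 with hvdef
  have h1 := (iter_escape q₂ hR2 hesc₂ hv (n - m)).2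
  have h2 : (fun x => q₂.eval x)^[n] w.2 = (fun x => q₂.eval x)^[n - m] v := by
    rw [hvdef, ← Function.iterate_add_apply]
    congr 1
    omega
  have h3 : ‖(fun x => q₂.eval x)^[n] w.2‖
      ≤ ‖(fun w : ℂ × ℂ => (q₁.eval w.1, q₂.eval w.2))^[n] w‖ := by
    rw [prod_iterate]
    exact norm_snd_le (((fun x => q₁.eval x)^[n] w.1, (fun x => q₂.eval x)^[n] w.2) : ℂ × ℂ)
  rw [h2] at h3
  have hv1 : (1:ℝ) ≤ ‖v‖ := le_trans hR2 hv
  nlinarith [pow_pos (two_pos (α := ℝ)) (n - m)]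

end Main

/-- Every sequence of naturals has a constant subsequence or tends to infinity. -/
lemma nat_seq_cases (u : ℕ → ℕ) :
    (∃ c, ∃ φ : ℕ → ℕ, StrictMono φ ∧ ∀ n, u (φ n) = c) ∨ Tendsto u atTop atTop := by
  by_cases hc : ∃ c, {n | u n = c}.Infinite
  · left
    obtain ⟨c, hcinf⟩ := hc
    obtain ⟨φ, hφ, h⟩ := Filter.extraction_of_frequently_atTop
      (Nat.frequently_atTop_iff_infinite.mpr hcinf)
    exact ⟨c, φ, hφ, h⟩
  · right
    push_neg at hc
    rw [Filter.tendsto_atTop]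
    intro b
    have hfin : {n | u n < b}.Finite := by
      refine Set.Finite.subset (Set.Finite.biUnion (Set.finite_Iio b) (fun c _ => hc c)) ?_
      intro n hn
      exact Set.mem_biUnion hn rfl
    have := hfin.eventually_cofinite_notMem
    rw [Nat.cofinite_eq_atTop] at this
    filter_upwards [this] with n hn
    omega

/-- A constant family converges uniformly to itself. -/
lemma tendstoUniformlyOn_const' {α E : Type*} [PseudoMetricSpace E] (f : α → E) (s : Set α) :
    TendstoUniformlyOn (fun _ : ℕ => f) f atTop s := by
  rw [Metric.tendstoUniformlyOn_iff]
  intro ε hε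
  filter_upwards with n x _
  simpa [dist_self] using hε

section Steps

variable {q₁ q₂ : Polynomial ℂ} {R₁ R₂ : ℝ}

/-- Step A: normality (divergence) outside the filled Julia set. -/
lemma stepA (hR1 : 1 ≤ R₁) (hR2 : 1 ≤ R₂)
    (hesc₁ : ∀ w : ℂ, R₁ ≤ ‖w‖ → 2 * ‖w‖ ≤ ‖q₁.eval w‖)
    (hesc₂ : ∀ w : ℂ, R₂ ≤ ‖w‖ → 2 * ‖w‖ ≤ ‖q₂.eval w‖)
    {z : ℂ × ℂ} (hz : z ∉ filledJuliaSet (fun w : ℂ × ℂ => (q₁.eval w.1, q₂.eval w.2))) :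
    NormalGenAt (fun n : ℕ => (fun w : ℂ × ℂ => (q₁.eval w.1, q₂.eval w.2))^[n]) z := by
  rw [prod_filled, Set.mem_prod, not_and_or] at hz
  -- In either case we get an open set and a uniform escape bound
  have key : ∃ U : Set (ℂ × ℂ), IsOpen U ∧ z ∈ U ∧ ∃ m : ℕ, ∀ w ∈ U, ∀ n, m ≤ n →
      (2:ℝ) ^ (n - m) ≤ ‖(fun w : ℂ × ℂ => (q₁.eval w.1, q₂.eval w.2))^[n] w‖ := by
    rcases hz with hz1 | hz2
    · obtain ⟨m, hm⟩ := escape_of_not_mem q₁ hR1 hesc₁ hz1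
      refine ⟨{w : ℂ × ℂ | R₁ < ‖(fun x => q₁.eval x)^[m] w.1‖}, ?_, hm, m, ?_⟩
      · exact isOpen_lt continuous_const
          ((((q₁.continuous).iterate m).comp continuous_fst).norm)
      · intro w hw n hn
        exact lower_bound_fst q₁ q₂ hR1 hesc₁ (le_of_lt hw) hn
    · obtain ⟨m, hm⟩ := escape_of_not_mem q₂ hR2 hesc₂ hz2
      refine ⟨{w : ℂ × ℂ | R₂ < ‖(fun x => q₂.eval x)^[m] w.2‖}, ?_, hm, m, ?_⟩
      · exact isOpen_lt continuous_const
          ((((q₂.continuous).iterate m).comp continuous_snd).norm)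
      · intro w hw n hn
        exact lower_bound_snd q₁ q₂ hR2 hesc₂ (le_of_lt hw) hn
  obtain ⟨U, hUopen, hzU, m, hU⟩ := key
  refine ⟨U, hUopen, hzU, ?_⟩
  intro u
  rcases nat_seq_cases u with ⟨c, φ, hφ, hconst⟩ | htop
  · refine ⟨φ, hφ, Or.inl ⟨(fun w : ℂ × ℂ => (q₁.eval w.1, q₂.eval w.2))^[c], ?_⟩⟩
    intro K _ _
    have : (fun n : ℕ => (fun w : ℂ × ℂ => (q₁.eval w.1, q₂.eval w.2))^[u (φ n)])
        = fun _ : ℕ => (fun w : ℂ × ℂ => (q₁.eval w.1, q₂.eval w.2))^[c] := by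
      funext n; rw [hconst n]
    rw [this]
    exact tendstoUniformlyOn_const' _ K
  · refine ⟨id, strictMono_id, Or.inr ?_⟩
    intro K hK _ M hM
    obtain ⟨N, hN⟩ := pow_unbounded_of_one_lt M (one_lt_two (α := ℝ))
    have hev : ∀ᶠ n in atTop, m + N ≤ u n := htop.eventually_ge_atTop (m + N)
    filter_upwards [hev] with n hn w hw
    have h1 := hU w (hK hw) (u n) (by omega)
    have h2 : (2:ℝ) ^ N ≤ 2 ^ (u n - m) :=
      pow_le_pow_right₀ one_le_two (by omega)
    simp only [id]
    linarith

end Steps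

section StepB

variable {q₁ q₂ : Polynomial ℂ} {R₁ R₂ : ℝ}

/-- Step B: normality (convergence) on the interior of the filled Julia set. -/
lemma stepB (hR1 : 1 ≤ R₁) (hR2 : 1 ≤ R₂)
    (hesc₁ : ∀ w : ℂ, R₁ ≤ ‖w‖ → 2 * ‖w‖ ≤ ‖q₁.eval w‖)
    (hesc₂ : ∀ w : ℂ, R₂ ≤ ‖w‖ → 2 * ‖w‖ ≤ ‖q₂.eval w‖)
    {z : ℂ × ℂ}
    (hz : z ∈ interior (filledJuliaSet (fun w : ℂ × ℂ => (q₁.eval w.1, q₂.eval w.2)))) :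
    NormalGenAt (fun n : ℕ => (fun w : ℂ × ℂ => (q₁.eval w.1, q₂.eval w.2))^[n]) z := by
  obtain ⟨ε, hεpos, hball⟩ := Metric.isOpen_iff.mp isOpen_interior z hz
  set r := ε / 4 with hrdef
  have hrpos : 0 < r := by positivity
  have hsub : closedBall z (2 * r) ⊆
      filledJuliaSet (fun w : ℂ × ℂ => (q₁.eval w.1, q₂.eval w.2)) := by
    refine subset_trans (closedBall_subset_ball ?_) (subset_trans hball interior_subset)
    rw [hrdef]; linarith
  rw [prod_filled] at hsub
  have hb1 : closedBall z.1 (2 * r) ⊆ filledJuliaSet (fun x => q₁.eval x) := by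
    intro x hx
    have hmem : ((x, z.2) : ℂ × ℂ) ∈ closedBall z (2 * r) := by
      rw [mem_closedBall] at hx ⊢
      rw [Prod.dist_eq]
      simp only [dist_self]
      exact max_le hx (by positivity)
    exact (hsub hmem).1
  have hb2 : closedBall z.2 (2 * r) ⊆ filledJuliaSet (fun x => q₂.eval x) := by
    intro x hx
    have hmem : ((z.1, x) : ℂ × ℂ) ∈ closedBall z (2 * r) := by
      rw [mem_closedBall] at hx ⊢
      rw [Prod.dist_eq]
      simp only [dist_self]
      exact max_le (by positivity) hx
    exact (hsub hmem).2
  refine ⟨ball z r, isOpen_ball, mem_ball_self hrpos, ?_⟩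
  intro u
  obtain ⟨φ₁, hφ₁, f₁, hconv₁⟩ := coord_normal q₁ hR1 hesc₁ hrpos hb1 u
  obtain ⟨φ₂, hφ₂, f₂, hconv₂⟩ := coord_normal q₂ hR2 hesc₂ hrpos hb2 (u ∘ φ₁)
  refine ⟨φ₁ ∘ φ₂, hφ₁.comp hφ₂, Or.inl ⟨fun w => (f₁ w.1, f₂ w.2), ?_⟩⟩
  intro K hK _
  rw [Metric.tendstoUniformlyOn_iff] at hconv₁ hconv₂ ⊢
  intro δ hδ
  have e1 := hφ₂.tendsto_atTop.eventually (hconv₁ δ hδ)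
  have e2 := hconv₂ δ hδ
  filter_upwards [e1, e2] with n h1 h2 w hw
  have hw' : w ∈ ball z r := hK hw
  rw [mem_ball, Prod.dist_eq] at hw'
  have hw1 : w.1 ∈ closedBall z.1 r := by
    rw [mem_closedBall]
    exact le_of_lt (lt_of_le_of_lt (le_max_left _ _) hw')
  have hw2 : w.2 ∈ closedBall z.2 r := by
    rw [mem_closedBall]
    exact le_of_lt (lt_of_le_of_lt (le_max_right _ _) hw')
  have hh1 := h1 w.1 hw1
  have hh2 := h2 w.2 hw2
  rw [prod_iterate, Prod.dist_eq]
  exact max_lt hh1 hh2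

end StepB

section StepC

variable {q₁ q₂ : Polynomial ℂ} {R₁ R₂ : ℝ}

/-- Step C: the iterates are not normal at any point of the frontier. -/
lemma stepC (hR1 : 1 ≤ R₁) (hR2 : 1 ≤ R₂)
    (hesc₁ : ∀ w : ℂ, R₁ ≤ ‖w‖ → 2 * ‖w‖ ≤ ‖q₁.eval w‖)
    (hesc₂ : ∀ w : ℂ, R₂ ≤ ‖w‖ → 2 * ‖w‖ ≤ ‖q₂.eval w‖)
    {z : ℂ × ℂ}
    (hz : z ∈ frontier (filledJuliaSet (fun w : ℂ × ℂ => (q₁.eval w.1, q₂.eval w.2)))) :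
    ¬ NormalGenAt (fun n : ℕ => (fun w : ℂ × ℂ => (q₁.eval w.1, q₂.eval w.2))^[n]) z := by
  rintro ⟨U, hUopen, hzU, hnorm⟩
  have hclosed : IsClosed (filledJuliaSet (fun w : ℂ × ℂ => (q₁.eval w.1, q₂.eval w.2))) := by
    rw [prod_filled]
    exact (filled_closed q₁ hR1 hesc₁).prod (filled_closed q₂ hR2 hesc₂)
  have hzK : z ∈ filledJuliaSet (fun w : ℂ × ℂ => (q₁.eval w.1, q₂.eval w.2)) := by
    have := frontier_subset_closure hz
    rwa [hclosed.closure_eq] at this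
  have hznotint : z ∉ interior (filledJuliaSet (fun w : ℂ × ℂ => (q₁.eval w.1, q₂.eval w.2))) :=
    fun h => hz.2 h
  -- orbit of z is bounded by max R₁ R₂
  have horb : ∀ n : ℕ, ‖(fun w : ℂ × ℂ => (q₁.eval w.1, q₂.eval w.2))^[n] z‖ ≤ max R₁ R₂ := by
    intro n
    rw [prod_filled, Set.mem_prod] at hzK
    have h1 := (mem_filled_iff q₁ hR1 hesc₁ z.1).mp hzK.1 n
    have h2 := (mem_filled_iff q₂ hR2 hesc₂ z.2).mp hzK.2 n
    simp only [prod_iterate, Prod.norm_def]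
    exact max_le_max h1 h2
  obtain ⟨φ, hφ, hcase⟩ := hnorm id
  rcases hcase with ⟨f, hf⟩ | hdiv
  · -- convergence case: contradiction with escaping points near z
    obtain ⟨ε, hεpos, hballU⟩ := Metric.isOpen_iff.mp hUopen z hzU
    set ρ := ε / 2 with hρdef
    have hρpos : 0 < ρ := by positivity
    have hsubU : closedBall z ρ ⊆ U :=
      subset_trans (closedBall_subset_ball (by rw [hρdef]; linarith)) hballU
    have hKconv := hf (closedBall z ρ) hsubU (isCompact_closedBall z ρ)
    -- find an escaping point in the ball
    have : ¬ ball z ρ ⊆ filledJuliaSet (fun w : ℂ × ℂ => (q₁.eval w.1, q₂.eval w.2)) := by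
      intro hsub
      exact hznotint (mem_interior.mpr ⟨ball z ρ, hsub, isOpen_ball, mem_ball_self hρpos⟩)
    obtain ⟨w, hwball, hwnot⟩ := Set.not_subset.mp this
    -- w escapes
    have hesc : ∃ m : ℕ, ∀ n, m ≤ n →
        (2:ℝ) ^ (n - m) ≤ ‖(fun w : ℂ × ℂ => (q₁.eval w.1, q₂.eval w.2))^[n] w‖ := by
      rw [prod_filled, Set.mem_prod, not_and_or] at hwnot
      rcases hwnot with h | h
      · obtain ⟨m, hm⟩ := escape_of_not_mem q₁ hR1 hesc₁ h
        exact ⟨m, fun n hn => lower_bound_fst q₁ q₂ hR1 hesc₁ hm.le hn⟩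
      · obtain ⟨m, hm⟩ := escape_of_not_mem q₂ hR2 hesc₂ h
        exact ⟨m, fun n hn => lower_bound_snd q₁ q₂ hR2 hesc₂ hm.le hn⟩
    obtain ⟨m, hm⟩ := hesc
    rw [Metric.tendstoUniformlyOn_iff] at hKconv
    obtain ⟨N, hN⟩ := pow_unbounded_of_one_lt (‖f w‖ + 1) (one_lt_two (α := ℝ))
    have hcomb := (hKconv 1 one_pos).and (eventually_ge_atTop (m + N))
    obtain ⟨n, hdist, hn⟩ := hcomb.exists
    have hφn : m + N ≤ φ n := le_trans hn (hφ.le_apply)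
    have hlow := hm (φ n) (by omega)
    have h2N : (2:ℝ) ^ N ≤ 2 ^ (φ n - m) := pow_le_pow_right₀ one_le_two (by omega)
    have hwcb : w ∈ closedBall z ρ := ball_subset_closedBall hwball
    have hd := hdist w hwcb
    have hub : ‖(fun w : ℂ × ℂ => (q₁.eval w.1, q₂.eval w.2))^[id (φ n)] w‖ < ‖f w‖ + 1 := by
      have key : ∀ a b : ℂ × ℂ, ‖b‖ ≤ ‖a‖ + dist a b := by
        intro a b
        rw [dist_eq_norm]
        calc ‖b‖ = ‖a - (a - b)‖ := by rw [sub_sub_cancel]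
          _ ≤ ‖a‖ + ‖a - b‖ := norm_sub_le _ _
      have h3 := key (f w) ((fun w : ℂ × ℂ => (q₁.eval w.1, q₂.eval w.2))^[id (φ n)] w)
      linarith
    simp only [id] at hub
    linarith
  · -- divergence case: contradiction with boundedness of the orbit of z
    have hsing : {z} ⊆ U := Set.singleton_subset_iff.mpr hzU
    have hM : (0:ℝ) < max R₁ R₂ + 1 := by
      have : (0:ℝ) < R₁ := lt_of_lt_of_le one_pos hR1
      have := le_max_left R₁ R₂
      linarith
    obtain ⟨n, hn⟩ := (hdiv {z} hsing isCompact_singleton (max R₁ R₂ + 1) hM).exists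
    have := hn z rfl
    have h2 := horb (id (φ n))
    simp only [id] at this h2
    linarith

end StepC

/-- For a non-degenerate bicomplex polynomial `F(w₁, w₂) = (q₁(w₁), q₂(w₂))` of degree `d ≥ 2`,
the bicomplex Julia set is the topological boundary of the bicomplex filled-in Julia set:
`J₂(F) = ∂K₂(F)`. -/
theorem stmt15 (q₁ q₂ : Polynomial ℂ) (d : ℕ) (hd : 2 ≤ d)
    (h₁ : q₁.natDegree = d) (h₂ : q₂.natDegree = d) :
    juliaSet (fun w : ℂ × ℂ => (q₁.eval w.1, q₂.eval w.2)) =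
      frontier (filledJuliaSet (fun w : ℂ × ℂ => (q₁.eval w.1, q₂.eval w.2))) := by
  obtain ⟨R₁, hR1, hesc₁⟩ := escape_radius q₁ (by rw [h₁]; exact hd)
  obtain ⟨R₂, hR2, hesc₂⟩ := escape_radius q₂ (by rw [h₂]; exact hd)
  have hclosed : IsClosed (filledJuliaSet (fun w : ℂ × ℂ => (q₁.eval w.1, q₂.eval w.2))) := by
    rw [prod_filled]
    exact (filled_closed q₁ hR1 hesc₁).prod (filled_closed q₂ hR2 hesc₂)
  ext z
  simp only [juliaSet, Set.mem_setOf_eq]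
  constructor
  · intro hz
    by_contra hfr
    rw [hclosed.frontier_eq, Set.mem_diff] at hfr
    by_cases hzK : z ∈ filledJuliaSet (fun w : ℂ × ℂ => (q₁.eval w.1, q₂.eval w.2))
    · by_cases hzint : z ∈ interior (filledJuliaSet (fun w : ℂ × ℂ => (q₁.eval w.1, q₂.eval w.2)))
      · exact hz (stepB hR1 hR2 hesc₁ hesc₂ hzint)
      · exact hfr ⟨hzK, hzint⟩
    · exact hz (stepA hR1 hR2 hesc₁ hesc₂ hzK)
  · intro hz
    exact stepC hR1 hR2 hesc₁ hesc₂ hz
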